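/- arXiv:2103.13472 — 2 statements merged into one kernel-verified Lean document; each statement's English description precedes it below -/
import Mathlib

section
/- Let φ(x) = φ₀(|x|) with φ₀ : [0,∞) → [0,1] nonincreasing and supported in [0,R], and ψ(x) = (1/|x|)∫₀^{|x|} φ₀(r) dr. Then |ψ(x) − φ(x)| ≤ C min{|x|/R, R/|x|} for some constant C independent of x and R; in particular ∫_{R₀}^{R₀ e^J} |ψ(x) − φ(x)|(dR/R) ≤ C' uniformly in x, where φ, ψ depend on the scale R. -/
open MeasureTheory

noncomputable section

abbrev E5 := EuclideanSpace ℝ (Fin 5)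

private lemma aux_intble (t a b : ℝ) (ht : 0 < t) (ha : 0 < a) (hab : a ≤ b) :
    IntervalIntegrable (fun R => min (t / R) (R / t) / R) volume a b := by
  apply ContinuousOn.intervalIntegrable
  have hsub : Set.uIcc a b ⊆ {R : ℝ | 0 < R} := by
    rw [Set.uIcc_of_le hab]
    intro R hR
    exact lt_of_lt_of_le ha hR.1
  exact ContinuousOn.div
    ((continuousOn_const.div continuousOn_id (fun R hR => (hsub hR).ne')).inf
      (continuousOn_id.div continuousOn_const (fun R _ => ht.ne')))
    continuousOn_id (fun R hR => (hsub hR).ne')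

private lemma int_low (t a b : ℝ) (ht : 0 < t) (ha : 0 < a) (hab : a ≤ b) (hbt : b ≤ t) :
    ∫ R in a..b, min (t / R) (R / t) / R ≤ 1 := by
  have hcongr : ∫ R in a..b, min (t / R) (R / t) / R = ∫ R in a..b, (1 : ℝ) / t := by
    apply intervalIntegral.integral_congr
    intro R hR
    rw [Set.uIcc_of_le hab] at hR
    have hR0 : 0 < R := lt_of_lt_of_le ha hR.1
    have hRt : R ≤ t := le_trans hR.2 hbt
    have hmin : min (t / R) (R / t) = R / t := by
      apply min_eq_right
      rw [div_le_div_iff₀ ht hR0]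
      exact mul_self_le_mul_self hR0.le hRt
    show min (t / R) (R / t) / R = 1 / t
    rw [hmin]
    field_simp
  rw [hcongr, intervalIntegral.integral_const]
  have : b - a ≤ t := by linarith
  rw [smul_eq_mul]
  rw [mul_one_div]
  exact div_le_one_of_le₀ this ht.le

private lemma int_high (t a b : ℝ) (ht : 0 < t) (hta : t ≤ a) (hab : a ≤ b) :
    ∫ R in a..b, min (t / R) (R / t) / R ≤ 1 := by
  have ha : 0 < a := lt_of_lt_of_le ht hta
  have hb : 0 < b := lt_of_lt_of_le ha hab
  have hcongr : ∫ R in a..b, min (t / R) (R / t) / R = ∫ R in a..b, t * R ^ (-2 : ℤ) := by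
    apply intervalIntegral.integral_congr
    intro R hR
    rw [Set.uIcc_of_le hab] at hR
    have hR0 : 0 < R := lt_of_lt_of_le ha hR.1
    have htR : t ≤ R := le_trans hta hR.1
    have hmin : min (t / R) (R / t) = t / R := by
      apply min_eq_left
      rw [div_le_div_iff₀ hR0 ht]
      exact mul_self_le_mul_self ht.le htR
    show min (t / R) (R / t) / R = t * R ^ (-2 : ℤ)
    rw [hmin]
    rw [zpow_neg, zpow_two]
    field_simp
  rw [hcongr, intervalIntegral.integral_const_mul]
  have hz : (0 : ℝ) ∉ Set.uIcc a b := by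
    rw [Set.uIcc_of_le hab]
    intro h
    exact absurd h.1 (not_le.mpr ha)
  rw [integral_zpow (Or.inr ⟨by norm_num, hz⟩)]
  have : (b : ℝ) ^ (-2 + 1 : ℤ) = b⁻¹ := by norm_num
  have h2 : (a : ℝ) ^ (-2 + 1 : ℤ) = a⁻¹ := by norm_num
  rw [this, h2]
  have hbinv : 0 ≤ b⁻¹ := by positivity
  have hainv : a⁻¹ ≤ t⁻¹ := inv_anti₀ ht hta
  have : t * ((b⁻¹ - a⁻¹) / ((-2 : ℤ) + 1)) = t * (a⁻¹ - b⁻¹) := by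
    push_cast
    ring
  rw [this]
  calc t * (a⁻¹ - b⁻¹) ≤ t * a⁻¹ := by nlinarith
    _ ≤ t * t⁻¹ := by nlinarith [inv_pos.mpr ha]
    _ = 1 := mul_inv_cancel₀ ht.ne'

theorem stmt4 (L : ℝ) (hL : 0 < L) :
    (∃ C > (0:ℝ), ∀ (R : ℝ), 0 < R → ∀ φ₀ : ℝ → ℝ,
      (∀ r ∈ Set.Ici (0:ℝ), φ₀ r ∈ Set.Icc (0:ℝ) 1) →
      AntitoneOn φ₀ (Set.Ici 0) →
      (∀ r, R ≤ r → φ₀ r = 0) →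
      (∀ a b, |φ₀ a - φ₀ b| ≤ L / R * |a - b|) →
      ∀ x : E5, x ≠ 0 →
        |(∫ r in (0:ℝ)..‖x‖, φ₀ r) / ‖x‖ - φ₀ ‖x‖|
          ≤ C * min (‖x‖ / R) (R / ‖x‖)) ∧
    ∃ C' > (0:ℝ), ∀ (R₀ J : ℝ), 0 < R₀ → 0 < J → ∀ x : E5, x ≠ 0 →
      ∫ R in R₀..(R₀ * Real.exp J), min (‖x‖ / R) (R / ‖x‖) / R ≤ C' := by
  constructor
  · refine ⟨L + 1, by linarith, ?_⟩
    intro R hR φ₀ h1 h2 h3 h4 x hx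
    set t := ‖x‖ with htdef
    have ht : 0 < t := norm_pos_iff.mpr hx
    have hcont : Continuous φ₀ := by
      have hlip : LipschitzWith (Real.toNNReal (L / R)) φ₀ := by
        apply LipschitzWith.of_dist_le_mul
        intro a b
        rw [Real.dist_eq, Real.dist_eq]
        calc |φ₀ a - φ₀ b| ≤ L / R * |a - b| := h4 a b
          _ ≤ (Real.toNNReal (L / R) : ℝ) * |a - b| := by
              rw [Real.coe_toNNReal']
              exact mul_le_mul_of_nonneg_right (le_max_left _ _) (abs_nonneg _)
      exact hlip.continuous
    rcases le_total t R with htR | hRt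
    · -- small |x|
      have hmin : min (t / R) (R / t) = t / R := by
        apply min_eq_left
        rw [div_le_div_iff₀ hR ht]
        exact mul_self_le_mul_self ht.le htR
      rw [hmin]
      have hint : IntervalIntegrable φ₀ volume 0 t := hcont.intervalIntegrable _ _
      have key : (∫ r in (0:ℝ)..t, φ₀ r) / t - φ₀ t
          = (∫ r in (0:ℝ)..t, (φ₀ r - φ₀ t)) / t := by
        rw [intervalIntegral.integral_sub hint (intervalIntegrable_const)]
        rw [intervalIntegral.integral_const, smul_eq_mul]
        field_simp
        ring
      rw [key, abs_div, abs_of_pos ht]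
      have hb : ‖∫ r in (0:ℝ)..t, (φ₀ r - φ₀ t)‖ ≤ (L / R * t) * |t - 0| := by
        apply intervalIntegral.norm_integral_le_of_norm_le_const
        intro r hr
        rw [Set.uIoc_of_le ht.le] at hr
        have h5 : |φ₀ r - φ₀ t| ≤ L / R * |r - t| := h4 r t
        have hrt : |r - t| ≤ t := by
          rw [abs_of_nonpos (by linarith [hr.2])]
          linarith [hr.1]
        calc ‖φ₀ r - φ₀ t‖ = |φ₀ r - φ₀ t| := rfl
          _ ≤ L / R * |r - t| := h5
          _ ≤ L / R * t := by
              exact mul_le_mul_of_nonneg_left hrt (div_nonneg hL.le hR.le)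
      have hstep : |∫ r in (0:ℝ)..t, (φ₀ r - φ₀ t)| / t ≤ L / R * t := by
        rw [div_le_iff₀ ht]
        calc |∫ r in (0:ℝ)..t, (φ₀ r - φ₀ t)| ≤ (L / R * t) * |t - 0| := by
              rw [← Real.norm_eq_abs]; exact hb
          _ = L / R * t * t := by rw [sub_zero, abs_of_pos ht]
      calc |∫ r in (0:ℝ)..t, (φ₀ r - φ₀ t)| / t ≤ L / R * t := hstep
        _ = L * (t / R) := by ring
        _ ≤ (L + 1) * (t / R) := by
            have : 0 ≤ t / R := div_nonneg ht.le hR.le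
            nlinarith
    · -- large |x|
      have hmin : min (t / R) (R / t) = R / t := by
        apply min_eq_right
        rw [div_le_div_iff₀ ht hR]
        exact mul_self_le_mul_self hR.le hRt
      have hφt : φ₀ t = 0 := h3 t hRt
      rw [hmin, hφt, sub_zero]
      have hint1 : IntervalIntegrable φ₀ volume 0 R := hcont.intervalIntegrable _ _
      have hint2 : IntervalIntegrable φ₀ volume R t := hcont.intervalIntegrable _ _
      have hsplit : ∫ r in (0:ℝ)..t, φ₀ r
          = (∫ r in (0:ℝ)..R, φ₀ r) + ∫ r in R..t, φ₀ r :=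
        (intervalIntegral.integral_add_adjacent_intervals hint1 hint2).symm
      have h0 : ∫ r in R..t, φ₀ r = 0 := by
        have : ∫ r in R..t, φ₀ r = ∫ r in R..t, (0 : ℝ) := by
          apply intervalIntegral.integral_congr
          intro r hr
          rw [Set.uIcc_of_le hRt] at hr
          exact h3 r hr.1
        rw [this, intervalIntegral.integral_zero]
      have hub : ∫ r in (0:ℝ)..R, φ₀ r ≤ R := by
        calc ∫ r in (0:ℝ)..R, φ₀ r ≤ ∫ r in (0:ℝ)..R, (1 : ℝ) := by
              apply intervalIntegral.integral_mono_on hR.le hint1 intervalIntegrable_const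
              intro r hr
              exact (h1 r hr.1).2
          _ = R := by simp
      have hlb : 0 ≤ ∫ r in (0:ℝ)..R, φ₀ r :=
        intervalIntegral.integral_nonneg hR.le (fun r hr => (h1 r hr.1).1)
      have habs : |∫ r in (0:ℝ)..t, φ₀ r| ≤ R := by
        rw [hsplit, h0, add_zero, abs_of_nonneg hlb]
        exact hub
      rw [abs_div, abs_of_pos ht]
      have hq : 0 ≤ R / t := div_nonneg hR.le ht.le
      calc |∫ r in (0:ℝ)..t, φ₀ r| / t ≤ R / t := by
            rw [div_le_div_iff₀ ht ht]
            nlinarith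
        _ ≤ (L + 1) * (R / t) := by nlinarith
  · refine ⟨2, by norm_num, ?_⟩
    intro R₀ J hR₀ hJ x hx
    set t := ‖x‖ with htdef
    have ht : 0 < t := norm_pos_iff.mpr hx
    set b := R₀ * Real.exp J with hbdef
    have hab : R₀ ≤ b := by
      have : (1 : ℝ) ≤ Real.exp J := by
        rw [← Real.exp_zero]
        exact Real.exp_le_exp.mpr hJ.le
      nlinarith
    rcases le_total b t with hbt | htb
    · linarith [int_low t R₀ b ht hR₀ hab hbt]
    · rcases le_total t R₀ with hta | hat
      · linarith [int_high t R₀ b ht hta hab]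
      · have hsplit : ∫ R in R₀..b, min (t / R) (R / t) / R
            = (∫ R in R₀..t, min (t / R) (R / t) / R)
              + ∫ R in t..b, min (t / R) (R / t) / R :=
          (intervalIntegral.integral_add_adjacent_intervals
            (aux_intble t R₀ t ht hR₀ hat) (aux_intble t t b ht ht htb)).symm
        rw [hsplit]
        linarith [int_low t R₀ t ht hR₀ hat le_rfl, int_high t t b ht le_rfl htb]

end
end

section
/- Let a_{jk}, b_{jk} ≥ 0 (representing γ_k, α_k, and moduli of functions). For complex-valued data, the pointwise quantity S = (∑_k γ_k |V_k(x)|²) ℳ(u)(y) + (∑_k γ_k |W_k(y)|²) ℳ(u)(x) − 2(∑_k α_k Im[V_k ū_k](x)) · (∑_k α_k Im[W_k ū_k](y)) satisfies S ≥ ∑_{j,m} (√(γ_m/γ_j) α_j |V_m(x)||u_j(y)| − √(γ_j/γ_m) α_m |W_j(y)||u_m(x)|)² ≥ 0, where ℳ(u)(x) = ∑_k (α_k²/γ_k)|u_k(x)|², V_k(x) ∈ ℂ⁵ and W_k(y) ∈ ℂ⁵ are arbitrary vectors with |Im[V_k ū_k](x)| ≤ |V_k(x)||u_k(x)| (Cauchy–Schwarz).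 -/
open Complex

noncomputable section

private lemma euclid_sum_apply {l : ℕ} (c : Fin l → ℝ)
    (f : Fin l → EuclideanSpace ℝ (Fin 5)) (j : Fin 5) :
    (∑ k, c k • f k) j = ∑ k, c k * f k j := by
  have h : (∑ k, c k • f k) j = ∑ k, (c k • f k) j :=
    by simp
  rw [h]
  exact Finset.sum_congr rfl fun k _ => rfl

theorem stmt9 (l : ℕ) (α γ : Fin l → ℝ) (hα : ∀ k, 0 < α k) (hγ : ∀ k, 0 < γ k)
    (a b : Fin l → ℂ) (V W : Fin l → EuclideanSpace ℂ (Fin 5))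
    -- Cauchy–Schwarz: `|Im[V_k ā_k]| ≤ |V_k||a_k|` and `|Im[W_k b̄_k]| ≤ |W_k||b_k|`
    (hV : ∀ k, Real.sqrt (∑ j, ((V k j) * (starRingEnd ℂ) (a k)).im ^ 2)
            ≤ ‖V k‖ * ‖a k‖)
    (hW : ∀ k, Real.sqrt (∑ j, ((W k j) * (starRingEnd ℂ) (b k)).im ^ 2)
            ≤ ‖W k‖ * ‖b k‖) :
    (∑ p : Fin l, ∑ q : Fin l,
        (Real.sqrt (γ q / γ p) * α p * ‖V q‖ * ‖b p‖
          - Real.sqrt (γ p / γ q) * α q * ‖W p‖ * ‖a q‖) ^ 2)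
      ≤ (∑ k, γ k * ‖V k‖ ^ 2) * (∑ k, α k ^ 2 / γ k * ‖b k‖ ^ 2)
        + (∑ k, γ k * ‖W k‖ ^ 2) * (∑ k, α k ^ 2 / γ k * ‖a k‖ ^ 2)
        - 2 * ∑ j : Fin 5,
            (∑ k, α k * ((V k j) * (starRingEnd ℂ) (a k)).im) *
            (∑ k, α k * ((W k j) * (starRingEnd ℂ) (b k)).im)
    ∧ (0:ℝ) ≤ ∑ p : Fin l, ∑ q : Fin l,
        (Real.sqrt (γ q / γ p) * α p * ‖V q‖ * ‖b p‖
          - Real.sqrt (γ p / γ q) * α q * ‖W p‖ * ‖a q‖) ^ 2 := by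
  -- key Cauchy-Schwarz step
  set v : Fin l → EuclideanSpace ℝ (Fin 5) :=
    fun k => (WithLp.equiv 2 (Fin 5 → ℝ)).symm
      (fun j => ((V k j) * (starRingEnd ℂ) (a k)).im) with hv
  set w : Fin l → EuclideanSpace ℝ (Fin 5) :=
    fun k => (WithLp.equiv 2 (Fin 5 → ℝ)).symm
      (fun j => ((W k j) * (starRingEnd ℂ) (b k)).im) with hw
  set A : EuclideanSpace ℝ (Fin 5) := ∑ k, (α k) • v k with hA
  set B : EuclideanSpace ℝ (Fin 5) := ∑ k, (α k) • w k with hB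
  have hAj : ∀ j, A j = ∑ k, α k * ((V k j) * (starRingEnd ℂ) (a k)).im := by
    intro j
    rw [hA, euclid_sum_apply]
    exact Finset.sum_congr rfl fun k _ => rfl
  have hBj : ∀ j, B j = ∑ k, α k * ((W k j) * (starRingEnd ℂ) (b k)).im := by
    intro j
    rw [hB, euclid_sum_apply]
    exact Finset.sum_congr rfl fun k _ => rfl
  have hnv : ∀ k, ‖v k‖ ≤ ‖V k‖ * ‖a k‖ := by
    intro k
    refine le_trans (le_of_eq ?_) (hV k)
    rw [EuclideanSpace.norm_eq]
    congr 1
    exact Finset.sum_congr rfl fun j _ => by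
      simp [hv, Real.norm_eq_abs, _root_.sq_abs]
  have hnw : ∀ k, ‖w k‖ ≤ ‖W k‖ * ‖b k‖ := by
    intro k
    refine le_trans (le_of_eq ?_) (hW k)
    rw [EuclideanSpace.norm_eq]
    congr 1
    exact Finset.sum_congr rfl fun j _ => by
      simp [hw, Real.norm_eq_abs, _root_.sq_abs]
  have hnA : ‖A‖ ≤ ∑ k, α k * (‖V k‖ * ‖a k‖) := by
    refine le_trans (norm_sum_le _ _) (Finset.sum_le_sum fun k _ => ?_)
    rw [norm_smul, Real.norm_eq_abs, abs_of_pos (hα k)]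
    exact mul_le_mul_of_nonneg_left (hnv k) (hα k).le
  have hnB : ‖B‖ ≤ ∑ k, α k * (‖W k‖ * ‖b k‖) := by
    refine le_trans (norm_sum_le _ _) (Finset.sum_le_sum fun k _ => ?_)
    rw [norm_smul, Real.norm_eq_abs, abs_of_pos (hα k)]
    exact mul_le_mul_of_nonneg_left (hnw k) (hα k).le
  have key : ∑ j : Fin 5,
            (∑ k, α k * ((V k j) * (starRingEnd ℂ) (a k)).im) *
            (∑ k, α k * ((W k j) * (starRingEnd ℂ) (b k)).im)
      ≤ (∑ k, α k * (‖V k‖ * ‖a k‖)) *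
        (∑ k, α k * (‖W k‖ * ‖b k‖)) := by
    have h1 : ∑ j : Fin 5,
            (∑ k, α k * ((V k j) * (starRingEnd ℂ) (a k)).im) *
            (∑ k, α k * ((W k j) * (starRingEnd ℂ) (b k)).im)
        = inner ℝ A B := by
      rw [PiLp.inner_apply]
      refine Finset.sum_congr rfl fun j _ => ?_
      rw [hAj j, hBj j, RCLike.inner_apply]
      simp [mul_comm]
    rw [h1]
    calc (inner ℝ A B : ℝ) ≤ ‖A‖ * ‖B‖ := real_inner_le_norm A B
      _ ≤ _ := by
        apply mul_le_mul hnA hnB (norm_nonneg B)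
        exact Finset.sum_nonneg fun k _ =>
          mul_nonneg (hα k).le (by positivity)
  -- expansion of the square
  have expand : (∑ p : Fin l, ∑ q : Fin l,
        (Real.sqrt (γ q / γ p) * α p * ‖V q‖ * ‖b p‖
          - Real.sqrt (γ p / γ q) * α q * ‖W p‖ * ‖a q‖) ^ 2)
      = (∑ k, γ k * ‖V k‖ ^ 2) * (∑ k, α k ^ 2 / γ k * ‖b k‖ ^ 2)
        + (∑ k, γ k * ‖W k‖ ^ 2) * (∑ k, α k ^ 2 / γ k * ‖a k‖ ^ 2)
        - 2 * ((∑ k, α k * (‖V k‖ * ‖a k‖)) *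
               (∑ k, α k * (‖W k‖ * ‖b k‖))) := by
    have step : ∀ p q : Fin l,
        (Real.sqrt (γ q / γ p) * α p * ‖V q‖ * ‖b p‖
          - Real.sqrt (γ p / γ q) * α q * ‖W p‖ * ‖a q‖) ^ 2
        = (γ q * ‖V q‖ ^ 2) * (α p ^ 2 / γ p * ‖b p‖ ^ 2)
          + (γ p * ‖W p‖ ^ 2) * (α q ^ 2 / γ q * ‖a q‖ ^ 2)
          - 2 * ((α q * (‖V q‖ * ‖a q‖)) *
                 (α p * (‖W p‖ * ‖b p‖))) := by
      intro p q
      have hpq : (0:ℝ) < γ q / γ p := div_pos (hγ q) (hγ p)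
      have hqp : (0:ℝ) < γ p / γ q := div_pos (hγ p) (hγ q)
      have s1 : Real.sqrt (γ q / γ p) ^ 2 = γ q / γ p := Real.sq_sqrt hpq.le
      have s2 : Real.sqrt (γ p / γ q) ^ 2 = γ p / γ q := Real.sq_sqrt hqp.le
      have s3 : Real.sqrt (γ q / γ p) * Real.sqrt (γ p / γ q) = 1 := by
        rw [← Real.sqrt_mul hpq.le]
        rw [div_mul_div_comm, mul_comm (γ q), div_self (mul_pos (hγ p) (hγ q)).ne']
        exact Real.sqrt_one
      have expand2 : (Real.sqrt (γ q / γ p) * α p * ‖V q‖ * ‖b p‖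
          - Real.sqrt (γ p / γ q) * α q * ‖W p‖ * ‖a q‖) ^ 2
        = Real.sqrt (γ q / γ p) ^ 2 * (α p * ‖V q‖ * ‖b p‖) ^ 2
          + Real.sqrt (γ p / γ q) ^ 2 * (α q * ‖W p‖ * ‖a q‖) ^ 2
          - 2 * (Real.sqrt (γ q / γ p) * Real.sqrt (γ p / γ q)) *
            ((α p * ‖V q‖ * ‖b p‖) * (α q * ‖W p‖ * ‖a q‖)) := by
        ring
      rw [expand2, s1, s2, s3]
      have hgp := (hγ p).ne'
      have hgq := (hγ q).ne'
      field_simp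
    have e1 : ∑ p : Fin l, ∑ q : Fin l,
        (γ q * ‖V q‖ ^ 2) * (α p ^ 2 / γ p * ‖b p‖ ^ 2)
        = (∑ k, γ k * ‖V k‖ ^ 2) * (∑ k, α k ^ 2 / γ k * ‖b k‖ ^ 2) := by
      rw [Finset.sum_comm, Finset.sum_mul_sum]
    have e2 : ∑ p : Fin l, ∑ q : Fin l,
        (γ p * ‖W p‖ ^ 2) * (α q ^ 2 / γ q * ‖a q‖ ^ 2)
        = (∑ k, γ k * ‖W k‖ ^ 2) * (∑ k, α k ^ 2 / γ k * ‖a k‖ ^ 2) := by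
      rw [Finset.sum_mul_sum]
    have e3 : ∑ p : Fin l, ∑ q : Fin l,
        (α q * (‖V q‖ * ‖a q‖)) * (α p * (‖W p‖ * ‖b p‖))
        = (∑ k, α k * (‖V k‖ * ‖a k‖)) *
          (∑ k, α k * (‖W k‖ * ‖b k‖)) := by
      rw [Finset.sum_comm, Finset.sum_mul_sum]
    calc (∑ p : Fin l, ∑ q : Fin l,
        (Real.sqrt (γ q / γ p) * α p * ‖V q‖ * ‖b p‖
          - Real.sqrt (γ p / γ q) * α q * ‖W p‖ * ‖a q‖) ^ 2)
        = (∑ p : Fin l, ∑ q : Fin l,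
            (γ q * ‖V q‖ ^ 2) * (α p ^ 2 / γ p * ‖b p‖ ^ 2))
          + (∑ p : Fin l, ∑ q : Fin l,
            (γ p * ‖W p‖ ^ 2) * (α q ^ 2 / γ q * ‖a q‖ ^ 2))
          - 2 * (∑ p : Fin l, ∑ q : Fin l,
            (α q * (‖V q‖ * ‖a q‖)) * (α p * (‖W p‖ * ‖b p‖))) := by
          rw [Finset.mul_sum]
          rw [← Finset.sum_add_distrib, ← Finset.sum_sub_distrib]
          refine Finset.sum_congr rfl fun p _ => ?_
          rw [Finset.mul_sum]
          rw [← Finset.sum_add_distrib, ← Finset.sum_sub_distrib]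
          exact Finset.sum_congr rfl fun q _ => step p q
      _ = _ := by rw [e1, e2, e3]
  constructor
  · rw [expand]
    linarith
  · exact Finset.sum_nonneg fun p _ => Finset.sum_nonneg fun q _ => sq_nonneg _

end
end
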